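/- Let r and h be positive integers with r < φ^h. Then r·F_{h+2} ≤ F_{2h+2} − 1; moreover, if h is even, then r·F_{h+2} ≤ F_{2h+2} − F_{h+2} + 1 ≤ F_{2h+2} − 2. -/

import Mathlib

open goldenRatio

lemma gold_pow_rec (n : ℕ) : φ ^ (n+3) = φ ^ (n+2) + φ ^ (n+1) := by
  linear_combination (φ:ℝ)^(n+1) * Real.goldenRatio_sq

lemma goldConj_pow_rec (n : ℕ) : ψ ^ (n+3) = ψ ^ (n+2) + ψ ^ (n+1) := by
  linear_combination (ψ:ℝ)^(n+1) * Real.goldenConj_sq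

lemma lucas_real (n : ℕ) : ((Nat.fib n + Nat.fib (n+2) : ℕ) : ℝ) = φ ^ (n+1) + ψ ^ (n+1) := by
  induction n using Nat.twoStepInduction with
  | zero => simpa using Real.goldenRatio_add_goldenConj.symm
  | one =>
    have h1 := Real.goldenRatio_sq
    have h2 := Real.goldenConj_sq
    have h3 := Real.goldenRatio_add_goldenConj
    norm_num [Nat.fib_add_two]
    nlinarith
  | more n ih1 ih2 =>
    have i1 : (Nat.fib n : ℝ) + Nat.fib (n+2) = φ^(n+1) + ψ^(n+1) := by exact_mod_cast ih1
    have i2 : (Nat.fib (n+1) : ℝ) + Nat.fib (n+3) = φ^(n+2) + ψ^(n+2) := by exact_mod_cast ih2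
    have e : (Nat.fib (n+4) : ℝ) = Nat.fib (n+2) + Nat.fib (n+3) := by
      exact_mod_cast (Nat.fib_add_two : Nat.fib (n+2+2) = _)
    have e2 : (Nat.fib (n+2) : ℝ) = Nat.fib n + Nat.fib (n+1) := by
      exact_mod_cast (Nat.fib_add_two : Nat.fib (n+2) = _)
    have g : (Nat.fib (n+2) : ℝ) + Nat.fib (n+4) = φ^(n+3) + ψ^(n+3) := by
      rw [gold_pow_rec, goldConj_pow_rec]
      linarith
    exact_mod_cast g

-- F_k F_{k+3} - F_{k+1} F_{k+2} = (-1)^(k+1) in ℤ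
lemma fib_id (k : ℕ) : (Nat.fib k : ℤ) * Nat.fib (k+3) - Nat.fib (k+1) * Nat.fib (k+2) = (-1)^(k+1) := by
  induction k with
  | zero => simp
  | succ n ih =>
    have e0 : (Nat.fib (n+2) : ℤ) = Nat.fib n + Nat.fib (n+1) := by
      exact_mod_cast (Nat.fib_add_two : Nat.fib (n+2) = _)
    have e1 : (Nat.fib (n+3) : ℤ) = Nat.fib (n+1) + Nat.fib (n+2) := by
      exact_mod_cast (Nat.fib_add_two : Nat.fib (n+1+2) = _)
    have e2 : (Nat.fib (n+4) : ℤ) = Nat.fib (n+2) + Nat.fib (n+3) := by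
      exact_mod_cast (Nat.fib_add_two : Nat.fib (n+2+2) = _)
    show (Nat.fib (n+1) : ℤ) * Nat.fib (n+4) - Nat.fib (n+2) * Nat.fib (n+3) = (-1)^(n+2)
    rw [e1, e0] at ih
    rw [e2, e1, e0]
    linear_combination -ih

noncomputable def goldenphi : ℝ := (1 + Real.sqrt 5) / 2

theorem stmt_10 (r h : ℕ) (hr : 0 < r) (hh : 0 < h)
    (hrh : (r : ℝ) < goldenphi ^ h) :
    r * Nat.fib (h + 2) ≤ Nat.fib (2 * h + 2) - 1 ∧
    (Even h →
      r * Nat.fib (h + 2) ≤ Nat.fib (2 * h + 2) - Nat.fib (h + 2) + 1 ∧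
      Nat.fib (2 * h + 2) - Nat.fib (h + 2) + 1 ≤ Nat.fib (2 * h + 2) - 2) := by
  obtain ⟨k, rfl⟩ : ∃ k, h = k + 1 := ⟨h - 1, by omega⟩
  have hphi : goldenphi = φ := rfl
  rw [hphi] at hrh
  show r * Nat.fib (k+3) <= Nat.fib (2*(k+1)+2) - 1 /\ (Even (k+1) -> r * Nat.fib (k+3) <= Nat.fib (2*(k+1)+2) - Nat.fib (k+3) + 1 /\ Nat.fib (2*(k+1)+2) - Nat.fib (k+3) + 1 <= Nat.fib (2*(k+1)+2) - 2)
  set L : ℕ := Nat.fib k + Nat.fib (k + 2) with hL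
  have hlr : (L : ℝ) = φ ^ (k+1) + ψ ^ (k+1) := by
    rw [hL]; exact_mod_cast lucas_real k
  have habs : |ψ ^ (k+1)| < 1 := by
    rw [abs_pow]
    exact pow_lt_one₀ (abs_nonneg _)
      (by rw [abs_lt]; exact ⟨Real.neg_one_lt_goldenConj, Real.goldenConj_neg.trans one_pos⟩) (by omega)
  -- key integer identity
  have hfa : (Nat.fib (2*(k+1)+2) : ℤ) =
      Nat.fib (k+1) * Nat.fib (k+2) + Nat.fib (k+2) * Nat.fib (k+3) := by
    have hq : Nat.fib (2*(k+1)+2) = Nat.fib (k+1) * Nat.fib (k+2) + Nat.fib (k+2) * Nat.fib (k+3) := by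
      rw [show 2*(k+1)+2 = k+1+(k+2)+1 by ring]
      exact Nat.fib_add (k+1) (k+2)
    exact_mod_cast hq
  have hid : (L : ℤ) * Nat.fib (k+3) = Nat.fib (2*(k+1)+2) + (-1)^(k+1) := by
    have := fib_id k
    rw [hL]; push_cast
    rw [hfa]
    push_cast at this ⊢
    linarith
  rcases Nat.even_or_odd (k+1) with he | ho
  · -- h even
    have hsign : 0 < ψ ^ (k+1) := he.pow_pos Real.goldenConj_ne_zero
    have hrL : (r : ℝ) < L := by rw [hlr]; linarith
    have hrLn : r + 1 ≤ L := by exact_mod_cast hrL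
    have hr1 : (r : ℤ) ≤ (L : ℤ) - 1 := by
      have : (r : ℤ) + 1 ≤ (L : ℤ) := by exact_mod_cast hrLn
      linarith
    have hmul : (r : ℤ) * Nat.fib (k+3) ≤ ((L : ℤ) - 1) * Nat.fib (k+3) :=
      mul_le_mul_of_nonneg_right hr1 (by positivity)
    have hone : ((-1:ℤ))^(k+1) = 1 := he.neg_one_pow
    have hA : (r : ℤ) * Nat.fib (k+3) + Nat.fib (k+3) ≤ Nat.fib (2*(k+1)+2) + 1 := by
      have : ((L : ℤ) - 1) * Nat.fib (k+3) = Nat.fib (2*(k+1)+2) + 1 - Nat.fib (k+3) := by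
        rw [sub_mul, hid, hone]; ring
      linarith
    have hA' : r * Nat.fib (k+3) + Nat.fib (k+3) ≤ Nat.fib (2*(k+1)+2) + 1 := by
      exact_mod_cast hA
    have hk1 : 1 ≤ k := by
      rcases Nat.eq_zero_or_pos k with rfl | hp
      · simp at he
      · exact hp
    have hB : 3 ≤ Nat.fib (k+3) := by
      calc 3 = Nat.fib 4 := by norm_num
        _ ≤ Nat.fib (k+3) := Nat.fib_mono (by omega)
    have hC : Nat.fib (k+3) + 3 ≤ Nat.fib (2*(k+1)+2) := by
      have h1 : Nat.fib (k+5) = Nat.fib (k+3) + Nat.fib (k+4) := Nat.fib_add_two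
      have h2 : 3 ≤ Nat.fib (k+4) := by
        calc 3 = Nat.fib 4 := by norm_num
          _ ≤ Nat.fib (k+4) := Nat.fib_mono (by omega)
      have h3 : Nat.fib (k+5) ≤ Nat.fib (2*(k+1)+2) := Nat.fib_mono (by omega)
      omega
    refine ⟨by omega, fun _ => ⟨by omega, by omega⟩⟩
  · -- h odd
    have hsign : -1 < ψ ^ (k+1) := by
      have := abs_lt.mp habs; linarith [this.1]
    have hrL : (r : ℝ) < L + 1 := by rw [hlr]; linarith
    have hrLn : r ≤ L := by
      have : r < L + 1 := by exact_mod_cast hrL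
      omega
    have hone : ((-1:ℤ))^(k+1) = -1 := ho.neg_one_pow
    have hA : (r : ℤ) * Nat.fib (k+3) ≤ Nat.fib (2*(k+1)+2) - 1 := by
      have := mul_le_mul_of_nonneg_right (show (r:ℤ) ≤ L by exact_mod_cast hrLn)
        (show (0:ℤ) ≤ Nat.fib (k+3) by positivity)
      rw [hid, hone] at this
      linarith
    have hA' : r * Nat.fib (k+3) + 1 ≤ Nat.fib (2*(k+1)+2) := by
      have h1 : 1 ≤ Nat.fib (2*(k+1)+2) := Nat.fib_pos.mpr (by omega)
      have : (r : ℤ) * Nat.fib (k+3) + 1 ≤ Nat.fib (2*(k+1)+2) := by linarith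
      exact_mod_cast this
    exact ⟨by omega, fun hEv => absurd hEv (Nat.not_even_iff_odd.mpr ho)⟩
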